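/- Under Assumption 1, if g(0, 0) < 0, then there exists a unique μ* ∈ (0,1) such that g(0, μ*) = 0; in particular μ_S^max is well defined and lies in (0,1) whenever g(0,0) < 0. -/
import Mathlib


/-- Effective infection rate β_eff(z_S, z_I, μ_S). -/
noncomputable def betaEff (a bP bU zS zI m : ℝ) : ℝ :=
  (bP + (bU - bP) * zI) * (a + (1 - a) * (zS * m + zI * (1 - m)))

/-- Endemic infection level y_EE(z_S, z_I, μ_S). -/
noncomputable def yEE (a gam bP bU zS zI m : ℝ) : ℝ :=
  1 - gam / betaEff a bP bU zS zI m

/-- The function h(z_I, μ_S). -/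
noncomputable def hFun (a gam bP bU L CP zI m : ℝ) : ℝ :=
  (1 - a) * L * (bP + (bU - bP) * zI) * yEE a gam bP bU 1 zI m - CP

/-- The function g(z_I, μ_S). -/
noncomputable def gFun (a gam bP bU L CP CU zI m : ℝ) : ℝ :=
  yEE a gam bP bU 1 zI m * (CU - CP)
    - (1 - m) * (1 - yEE a gam bP bU 1 zI m) * (-(hFun a gam bP bU L CP zI m))

/-- Expected-utility difference ΔU[S̄]. -/
noncomputable def dUS (a bP bU L CP y zI : ℝ) : ℝ :=
  (1 - a) * L * (bP + (bU - bP) * zI) * y - CP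

/-- Expected-utility difference ΔU[Ī]. -/
noncomputable def dUI (a bP bU L CP CU m y zI : ℝ) : ℝ :=
  ((1 - m) * (1 - y) / (y + (1 - m) * (1 - y))) *
    ((1 - a) * L * (bP + (bU - bP) * zI) * y - CU) + CU - CP

/-- Stationary Nash equilibrium for signal μ_S = m. -/
def IsSNE (a gam bP bU L CP CU m y zS zI : ℝ) : Prop :=
  y ∈ Set.Ioo (0:ℝ) 1 ∧ zS ∈ Set.Icc (0:ℝ) 1 ∧ zI ∈ Set.Icc (0:ℝ) 1 ∧
  gam < betaEff a bP bU zS zI m ∧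
  y = yEE a gam bP bU zS zI m ∧
  (0 < dUS a bP bU L CP y zI → zS = 0) ∧
  (dUS a bP bU L CP y zI < 0 → zS = 1) ∧
  (0 < dUI a bP bU L CP CU m y zI → zI = 0) ∧
  (dUI a bP bU L CP CU m y zI < 0 → zI = 1)

/-- Characterization of μ_S^max. -/
def IsMuMax (a gam bP bU L CP CU mmax : ℝ) : Prop :=
  (0 ≤ gFun a gam bP bU L CP CU 0 0 ∧ mmax = 0) ∨
  (gFun a gam bP bU L CP CU 0 0 < 0 ∧ mmax ∈ Set.Ioo (0:ℝ) 1 ∧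
    gFun a gam bP bU L CP CU 0 mmax = 0)

/-- The threshold μ_S^min. -/
noncomputable def muMin (a gam bU L CP CU : ℝ) : ℝ :=
  1 - (bU - gam) * (CU - CP) / (gam * (CP - (1 - a) * L * (bU - gam)))


lemma quad_unique (A B C m1 m2 : ℝ) (hC : C < 0) (hS : 0 < A + B + C)
    (h1 : m1 ∈ Set.Ioo (0:ℝ) 1) (h2 : m2 ∈ Set.Ioo (0:ℝ) 1)
    (e1 : A*m1^2 + B*m1 + C = 0) (e2 : A*m2^2 + B*m2 + C = 0) : m1 = m2 := by
  by_contra hne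
  have hd : m1 - m2 ≠ 0 := sub_ne_zero.mpr hne
  have key : A*(m1+m2) + B = 0 := by
    have h : (m1 - m2) * (A*(m1+m2) + B) = 0 := by linear_combination e1 - e2
    rcases mul_eq_zero.mp h with h' | h'
    · exact absurd h' hd
    · exact h'
  have hCval : C = A * (m1 * m2) := by linear_combination e1 - m1 * key
  have hSval : A + B + C = A * ((1-m1)*(1-m2)) := by linear_combination key + hCval
  have hm : 0 < m1 * m2 := mul_pos h1.1 h2.1
  have hm' : 0 < (1-m1)*(1-m2) := mul_pos (by linarith [h1.2]) (by linarith [h2.2])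
  have hA1 : A < 0 := by
    rcases lt_trichotomy A 0 with h|h|h
    · exact h
    · rw [hCval, h] at hC; simp at hC
    · nlinarith
  nlinarith

lemma gkey (a gam bP bU L CP CU : ℝ) (ha : 0 < a) (ha1 : a < 1) (hbP : 0 < bP)
    (m : ℝ) (hm0 : 0 ≤ m) :
    gFun a gam bP bU L CP CU 0 m * (bP * (a + (1-a)*m)^2)
      = ((CU-CP)*bP*(1-a)^2 - gam*((1-a)*L*bP - CP)*(1-a)) * m^2
        + (2*(CU-CP)*bP*a*(1-a) - (CU-CP)*gam*(1-a)
            + gam*(((1-a)*L*bP-CP)*(1-a) - ((1-a)*L*bP-CP)*a + (1-a)*L*gam)) * m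
        + ((CU-CP)*bP*a^2 - (CU-CP)*gam*a + gam*(((1-a)*L*bP-CP)*a - (1-a)*L*gam)) := by
  have ht : (0:ℝ) < a + (1-a)*m := by nlinarith
  simp only [gFun, yEE, hFun, betaEff]
  have h1 : bP + (bU - bP) * 0 = bP := by ring
  have h2 : a + (1 - a) * (1 * m + 0 * (1 - m)) = a + (1-a)*m := by ring
  rw [h1, h2]
  field_simp
  ring

theorem stmt10
    (a gam bP bU L CP CU : ℝ)
    (ha : a ∈ Set.Ioo (0:ℝ) 1) (hgam : gam ∈ Set.Ioo (0:ℝ) 1)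
    (hbP : 0 < bP) (hbPU : bP < bU) (hbU1 : bU < 1)
    (hL : 0 < L) (hCP : 0 < CP) (hCPU : CP < CU)
    (hA1 : gam < a * bP)
    (hg00 : gFun a gam bP bU L CP CU 0 0 < 0) :
    ∃! m : ℝ, m ∈ Set.Ioo (0:ℝ) 1 ∧ gFun a gam bP bU L CP CU 0 m = 0 := by
  obtain ⟨ha0, ha1⟩ := ha
  obtain ⟨hg0, hg1⟩ := hgam
  set A : ℝ := (CU-CP)*bP*(1-a)^2 - gam*((1-a)*L*bP - CP)*(1-a) with hA
  set B : ℝ := 2*(CU-CP)*bP*a*(1-a) - (CU-CP)*gam*(1-a)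
      + gam*(((1-a)*L*bP-CP)*(1-a) - ((1-a)*L*bP-CP)*a + (1-a)*L*gam) with hB
  set C : ℝ := (CU-CP)*bP*a^2 - (CU-CP)*gam*a + gam*(((1-a)*L*bP-CP)*a - (1-a)*L*gam) with hCdef
  have hkey : ∀ m : ℝ, 0 ≤ m →
      gFun a gam bP bU L CP CU 0 m * (bP * (a + (1-a)*m)^2) = A*m^2 + B*m + C := by
    intro m hm; exact gkey a gam bP bU L CP CU ha0 ha1 hbP m hm
  have hC : C < 0 := by
    have h0 := hkey 0 le_rfl
    have h0' : gFun a gam bP bU L CP CU 0 0 * (bP * a^2) = C := by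
      linear_combination h0
    rw [← h0']
    exact mul_neg_of_neg_of_pos hg00 (by positivity)
  have hgamb : gam < bP := lt_of_lt_of_le hA1 (by nlinarith)
  have hS : 0 < A + B + C := by
    have : A + B + C = (CU - CP) * (bP - gam) := by rw [hA, hB, hCdef]; ring
    rw [this]
    exact mul_pos (by linarith) (by linarith)
  have hcont : Continuous fun m : ℝ => A*m^2 + B*m + C := by continuity
  have hiv := intermediate_value_Ioo (le_of_lt one_pos) hcont.continuousOn
      (a := (0:ℝ)) (b := 1)
  have h0mem : (0:ℝ) ∈ Set.Ioo (A*0^2 + B*0 + C) (A*1^2 + B*1 + C) := by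
    constructor <;> [skip; skip] <;> norm_num <;> linarith
  obtain ⟨m, hmIoo, hme⟩ := hiv h0mem
  have hroot : ∀ m' : ℝ, m' ∈ Set.Ioo (0:ℝ) 1 → gFun a gam bP bU L CP CU 0 m' = 0 →
      A*m'^2 + B*m' + C = 0 := by
    intro m' hm' hg'
    rw [← hkey m' hm'.1.le, hg', zero_mul]
  have hgm : gFun a gam bP bU L CP CU 0 m = 0 := by
    have hk := hkey m hmIoo.1.le
    have hme' : A*m^2 + B*m + C = 0 := hme
    rw [hme'] at hk
    have ht : (0:ℝ) < a + (1-a)*m := by nlinarith [hmIoo.1]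
    have hne : bP * (a + (1-a)*m)^2 ≠ 0 := by positivity
    exact (mul_eq_zero.mp hk).resolve_right hne
  refine ⟨m, ⟨hmIoo, hgm⟩, ?_⟩
  rintro m' ⟨hm', hg'⟩
  exact quad_unique A B C m' m hC hS hm' hmIoo (hroot m' hm' hg') (hroot m hmIoo hgm)
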